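/- Suppose complex-valued differentiable functions x₁, x₂, e₁, e₂, r, γ₃ of t satisfy the system ẋ₁ = -(i/2)(rx₁+γ₃), ẋ₂ = (i/2)(rx₂+γ₃), ė₁ = -ire₁, ė₂ = ire₂, ṙ = (i/2)(x₂-x₁+e₂-e₁), γ̇₃ = (i/2)(e₁x₂-e₂x₁). Then the function r² - 2(x₁+x₂) - e₁ - e₂ is constant (its derivative is identically zero). -/

import Mathlib

open Complex in
theorem stmt_7 (x₁ x₂ e₁ e₂ r γ₃ : ℝ → ℂ)
    (hx₁ : ∀ t, HasDerivAt x₁ (-(I/2)*(r t * x₁ t + γ₃ t)) t)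
    (hx₂ : ∀ t, HasDerivAt x₂ ((I/2)*(r t * x₂ t + γ₃ t)) t)
    (he₁ : ∀ t, HasDerivAt e₁ (-I * r t * e₁ t) t)
    (he₂ : ∀ t, HasDerivAt e₂ (I * r t * e₂ t) t)
    (hr : ∀ t, HasDerivAt r ((I/2)*(x₂ t - x₁ t + e₂ t - e₁ t)) t)
    (hγ₃ : ∀ t, HasDerivAt γ₃ ((I/2)*(e₁ t * x₂ t - e₂ t * x₁ t)) t) :
    ∀ t, HasDerivAt (fun t => (r t)^2 - 2*(x₁ t + x₂ t) - e₁ t - e₂ t) 0 t := by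
  intro t
  have h1 : HasDerivAt (fun t => r t * r t) (2 * r t * ((I/2)*(x₂ t - x₁ t + e₂ t - e₁ t))) t := by
    exact ((hr t).mul (hr t)).congr_deriv (by ring)
  have h := ((h1.sub (((hx₁ t).add (hx₂ t)).const_mul (2:ℂ))).sub (he₁ t)).sub (he₂ t)
  simp only [pow_two]
  exact h.congr_deriv (by ring)
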